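/- arXiv:1504.01472 — 3 statements merged into one kernel-verified Lean document; each statement's English description precedes it below -/
import Mathlib

section
/- There exists an independent set of size 381 in the third strong power of the 15-cycle; that is, there is a set S of 381 vectors in (ZMod 15)^3 such that for any two distinct u, v in S there exists a coordinate i with min(|u_i − v_i|, 15 − |u_i − v_i|) ≥ 2. Consequently α(C_15^3) ≥ 381. -/
set_option maxRecDepth 10000

/-- Circular distance between two elements of `ZMod p`, computed via representatives
in `{0, …, p−1}`: `min (|x − y|) (p − |x − y|)`. -/
def circDist (p : ℕ) (x y : ZMod p) : ℕ :=
  min ((x.val : ℤ) - (y.val : ℤ)).natAbs (p - ((x.val : ℤ) - (y.val : ℤ)).natAbs)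

lemma circDist_comm (p : ℕ) (x y : ZMod p) : circDist p x y = circDist p y x := by
  unfold circDist
  rw [show ((x.val : ℤ) - y.val).natAbs = ((y.val : ℤ) - x.val).natAbs by omega]

/-- The `d`-th strong power of the cycle `C_p`: vertices are vectors in `(ZMod p)^d`,
and distinct vertices are adjacent iff every coordinate has circular distance at most 1. -/
def cyclePow (p d : ℕ) : SimpleGraph (Fin d → ZMod p) where
  Adj u v := u ≠ v ∧ ∀ i, circDist p (u i) (v i) ≤ 1
  symm := ⟨by
    intro u v ⟨h1, h2⟩
    exact ⟨h1.symm, fun i => (circDist_comm p (v i) (u i)) ▸ h2 i⟩⟩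
  loopless := ⟨fun v h => h.1 rfl⟩

/-- The independence number of a graph: the largest size of a finite set of
pairwise non-adjacent vertices. -/
noncomputable def indepNum {V : Type*} (G : SimpleGraph V) : ℕ :=
  sSup {n | ∃ s : Finset V, (∀ u ∈ s, ∀ v ∈ s, u ≠ v → ¬ G.Adj u v) ∧ s.card = n}

/-- Nat distance -/
def nd (a b : ℕ) : ℕ := max (a - b) (b - a)

/-- far check -/
def far (a b : ℕ) : Bool := decide (2 ≤ min (nd a b) (15 - nd a b))

def chk (s t : ℕ × ℕ × ℕ) : Bool := far s.1 t.1 || far s.2.1 t.2.1 || far s.2.2 t.2.2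

def myL : List (ℕ × ℕ × ℕ) := [
(2,0,0), (4,0,0), (6,1,0), (8,2,0), (10,2,0), (12,3,0), (14,3,0), (1,4,0),
  (3,5,0), (12,5,0), (14,5,0), (1,6,0), (3,7,0), (5,7,0), (14,7,0), (1,8,0),
  (3,9,0), (5,9,0), (7,10,0), (5,11,0), (9,11,0), (7,12,0), (9,13,0), (11,13,0),
  (0,14,0), (13,14,0), (8,0,1), (10,0,1), (12,1,1), (14,1,1), (1,2,1), (3,3,1),
  (5,3,1), (7,4,1), (9,4,1), (5,5,1), (7,6,1), (9,6,1), (11,7,1), (7,8,1),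
  (9,9,1), (11,9,1), (0,10,1), (13,10,1), (2,11,1), (11,11,1), (0,12,1), (13,12,1),
  (2,13,1), (4,13,1), (6,14,1), (1,0,2), (3,1,2), (5,1,2), (7,2,2), (9,2,2),
  (11,3,2), (0,4,2), (13,4,2), (2,5,2), (11,5,2), (0,6,2), (13,6,2), (2,7,2),
  (4,7,2), (0,8,2), (13,8,2), (2,9,2), (4,9,2), (6,10,2), (4,11,2), (8,11,2),
  (6,12,2), (8,13,2), (10,13,2), (12,14,2), (14,14,2), (7,0,3), (9,0,3), (11,1,3),
  (0,2,3), (13,2,3), (2,3,3), (4,3,3), (6,4,3), (4,5,3), (8,5,3), (6,6,3),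
  (8,7,3), (10,7,3), (6,8,3), (8,9,3), (10,9,3), (12,10,3), (14,10,3), (10,11,3),
  (12,12,3), (14,12,3), (1,13,3), (3,14,3), (5,14,3), (0,0,4), (13,0,4), (2,1,4),
  (4,1,4), (6,2,4), (8,3,4), (10,3,4), (12,4,4), (14,4,4), (1,5,4), (10,5,4),
  (12,6,4), (14,6,4), (1,7,4), (3,8,4), (12,8,4), (14,8,4), (1,9,4), (3,10,4),
  (5,10,4), (1,11,4), (7,11,4), (3,12,4), (5,12,4), (7,13,4), (9,13,4), (11,14,4),
  (6,0,5), (8,0,5), (10,1,5), (12,2,5), (14,2,5), (1,3,5), (3,3,5), (5,4,5),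
  (7,5,5), (3,6,5), (5,6,5), (7,7,5), (9,7,5), (5,8,5), (7,9,5), (9,9,5),
  (11,10,5), (9,11,5), (13,11,5), (11,12,5), (0,13,5), (13,13,5), (2,14,5), (4,14,5),
  (12,0,6), (14,0,6), (1,1,6), (3,1,6), (5,2,6), (7,2,6), (9,3,6), (11,4,6),
  (13,4,6), (0,5,6), (9,5,6), (11,6,6), (13,6,6), (0,7,6), (2,8,6), (11,8,6),
  (0,9,6), (13,9,6), (2,10,6), (4,10,6), (0,11,6), (6,11,6), (2,12,6), (4,12,6),
  (6,13,6), (8,13,6), (10,14,6), (5,0,7), (7,0,7), (9,1,7), (11,2,7), (13,2,7),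
  (0,3,7), (2,3,7), (4,4,7), (6,4,7), (2,6,7), (4,6,7), (6,7,7), (8,7,7),
  (4,8,7), (6,9,7), (8,9,7), (10,10,7), (8,11,7), (12,11,7), (10,12,7), (12,13,7),
  (14,13,7), (1,14,7), (3,14,7), (11,0,8), (13,0,8), (0,1,8), (2,1,8), (4,2,8),
  (6,2,8), (8,3,8), (10,4,8), (12,4,8), (8,5,8), (14,5,8), (10,6,8), (12,6,8),
  (14,7,8), (1,8,8), (10,8,8), (12,8,8), (14,9,8), (1,10,8), (3,10,8), (5,11,8),
  (14,11,8), (1,12,8), (3,12,8), (5,13,8), (7,13,8), (9,14,8), (4,0,9), (6,0,9),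
  (8,1,9), (10,2,9), (12,2,9), (1,3,9), (14,3,9), (3,4,9), (5,4,9), (1,6,9),
  (3,6,9), (5,6,9), (7,7,9), (3,8,9), (5,8,9), (7,9,9), (9,10,9), (7,11,9),
  (11,11,9), (9,12,9), (11,13,9), (13,13,9), (0,14,9), (2,14,9), (10,0,10), (12,0,10),
  (1,1,10), (14,1,10), (3,2,10), (5,2,10), (7,3,10), (9,4,10), (11,4,10), (7,5,10),
  (13,5,10), (9,6,10), (11,6,10), (13,7,10), (0,8,10), (9,8,10), (11,9,10), (13,9,10),
  (0,10,10), (2,10,10), (4,10,10), (13,11,10), (0,12,10), (2,12,10), (4,12,10), (6,13,10),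
  (8,14,10), (3,0,11), (5,0,11), (7,1,11), (9,2,11), (11,2,11), (0,3,11), (13,3,11),
  (2,4,11), (4,4,11), (0,6,11), (2,6,11), (4,6,11), (6,7,11), (2,8,11), (4,8,11),
  (6,9,11), (8,10,11), (6,11,11), (10,11,11), (8,12,11), (10,13,11), (12,13,11), (1,14,11),
  (14,14,11), (9,0,12), (11,0,12), (0,1,12), (13,1,12), (2,2,12), (4,2,12), (6,3,12),
  (8,4,12), (6,5,12), (10,5,12), (13,5,12), (8,6,12), (10,7,12), (12,7,12), (8,8,12),
  (10,9,12), (12,9,12), (14,9,12), (1,10,12), (3,11,12), (12,11,12), (1,12,12), (14,12,12),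
  (3,13,12), (5,13,12), (7,14,12), (3,0,13), (5,0,13), (7,1,13), (9,2,13), (11,2,13),
  (0,3,13), (13,3,13), (2,4,13), (4,4,13), (0,5,13), (2,6,13), (4,6,13), (6,7,13),
  (14,7,13), (1,8,13), (3,9,13), (5,9,13), (7,10,13), (5,11,13), (10,11,13), (7,12,13),
  (9,13,13), (11,13,13), (0,14,13), (13,14,13), (9,0,14), (11,0,14), (0,1,14), (13,1,14),
  (2,2,14), (4,2,14), (6,3,14), (8,4,14), (10,4,14), (6,5,14), (8,6,14), (10,7,14),
  (12,7,14), (8,8,14), (10,9,14), (12,9,14), (14,9,14), (1,10,14), (3,11,14), (12,11,14),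
  (1,12,14), (14,12,14), (3,13,14), (5,13,14), (7,14,14)  ]

set_option maxHeartbeats 4000000 in
lemma myL_pairwise : myL.Pairwise (fun s t => chk s t = true) := by decide

lemma myL_length : myL.length = 381 := by decide

set_option maxHeartbeats 4000000 in
lemma myL_lt : ∀ s ∈ myL, s.1 < 15 ∧ s.2.1 < 15 ∧ s.2.2 < 15 := by decide

def f (t : ℕ × ℕ × ℕ) : Fin 3 → ZMod 15 := ![(t.1 : ZMod 15), (t.2.1 : ZMod 15), (t.2.2 : ZMod 15)]

lemma circ_eq (a b : ℕ) (ha : a < 15) (hb : b < 15) :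
    circDist 15 (a : ZMod 15) (b : ZMod 15) = min (nd a b) (15 - nd a b) := by
  unfold circDist
  rw [ZMod.val_natCast_of_lt ha, ZMod.val_natCast_of_lt hb]
  have : ((a : ℤ) - b).natAbs = nd a b := by unfold nd; omega
  rw [this]

lemma far_spec (a b : ℕ) (ha : a < 15) (hb : b < 15) (h : far a b = true) :
    2 ≤ circDist 15 (a : ZMod 15) (b : ZMod 15) := by
  rw [circ_eq a b ha hb]
  exact of_decide_eq_true h

lemma natCast_inj15 (a b : ℕ) (ha : a < 15) (hb : b < 15) (h : (a : ZMod 15) = b) : a = b := by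
  have := congrArg ZMod.val h
  rwa [ZMod.val_natCast_of_lt ha, ZMod.val_natCast_of_lt hb] at this

lemma chk_ne (s t : ℕ × ℕ × ℕ) (h : chk s t = true) : s ≠ t := by
  rintro rfl
  unfold chk far nd at h
  simp only [Bool.or_eq_true, decide_eq_true_eq] at h
  omega

lemma chk_spec (s t : ℕ × ℕ × ℕ) (hs : s ∈ myL) (ht : t ∈ myL) (h : chk s t = true) :
    ∃ i, 2 ≤ circDist 15 (f s i) (f t i) := by
  obtain ⟨h1, h2, h3⟩ := myL_lt s hs
  obtain ⟨h4, h5, h6⟩ := myL_lt t ht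
  unfold chk at h
  simp only [Bool.or_eq_true] at h
  rcases h with (h | h) | h
  · exact ⟨0, far_spec _ _ h1 h4 h⟩
  · exact ⟨1, far_spec _ _ h2 h5 h⟩
  · exact ⟨2, far_spec _ _ h3 h6 h⟩

lemma f_inj (s t : ℕ × ℕ × ℕ) (hs : s ∈ myL) (ht : t ∈ myL) (h : f s = f t) : s = t := by
  obtain ⟨h1, h2, h3⟩ := myL_lt s hs
  obtain ⟨h4, h5, h6⟩ := myL_lt t ht
  have e0 := congrFun h 0
  have e1 := congrFun h 1
  have e2 := congrFun h 2
  simp only [f, Matrix.cons_val_zero, Matrix.cons_val_one, Matrix.head_cons,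
    Matrix.cons_val_two, Matrix.tail_cons] at e0 e1 e2
  have := natCast_inj15 _ _ h1 h4 e0
  have := natCast_inj15 _ _ h2 h5 e1
  have := natCast_inj15 _ _ h3 h6 e2
  obtain ⟨a, b, c⟩ := s; obtain ⟨a', b', c'⟩ := t
  simp_all

def myS : Finset (Fin 3 → ZMod 15) := (myL.map f).toFinset

lemma far_symm (a b : ℕ) : far a b = far b a := by
  simp only [far, nd]
  congr 2
  omega

lemma chk_symm : Symmetric (fun s t : ℕ × ℕ × ℕ => chk s t = true) := by
  intro s t h
  simp only [chk, far_symm] at h ⊢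
  tauto

lemma myL_nodup : myL.Nodup :=
  myL_pairwise.imp (fun h => chk_ne _ _ h)

lemma map_nodup : (myL.map f).Nodup :=
  myL_nodup.map_on (fun s hs t ht h => f_inj s t hs ht h)

lemma myS_card : myS.card = 381 := by
  rw [myS, List.toFinset_card_of_nodup map_nodup, List.length_map, myL_length]

lemma myS_indep : ∀ u ∈ myS, ∀ v ∈ myS, u ≠ v →
    ∃ i, 2 ≤ circDist 15 (u i) (v i) := by
  intro u hu v hv huv
  simp only [myS, List.mem_toFinset, List.mem_map] at hu hv
  obtain ⟨s, hs, rfl⟩ := hu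
  obtain ⟨t, ht, rfl⟩ := hv
  have hst : s ≠ t := fun e => huv (by rw [e])
  haveI : Std.Symm (fun s t : ℕ × ℕ × ℕ => chk s t = true) := ⟨fun a b h => chk_symm h⟩
  exact chk_spec s t hs ht (myL_pairwise.forall hs ht hst)

/-- There is an independent set of size 381 in the 3th strong power of the 15-cycle,
hence α(C_15^3) ≥ 381. -/
theorem indep_set_C15_pow3 :
    (∃ S : Finset (Fin 3 → ZMod 15), S.card = 381 ∧
      ∀ u ∈ S, ∀ v ∈ S, u ≠ v → ∃ i, 2 ≤ circDist 15 (u i) (v i)) ∧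
    381 ≤ indepNum (cyclePow 15 3) := by
  constructor
  · exact ⟨myS, myS_card, myS_indep⟩
  · apply le_csSup
    · refine ⟨Fintype.card (Fin 3 → ZMod 15), ?_⟩
      rintro n ⟨s, -, rfl⟩
      exact Finset.card_le_univ s
    · refine ⟨myS, ?_, myS_card⟩
      intro u hu v hv huv hadj
      obtain ⟨i, hi⟩ := myS_indep u hu v hv huv
      exact absurd (hadj.2 i) (by omega)
end

section
/- The cube root of the independence number of the third strong power of the 15-cycle exceeds 7.2495: (α(C_15^3) : ℝ)^(1/3) ≥ 381^(1/3) > 7.2495. In particular, the Shannon capacity of C_15, defined as sup over d ≥ 1 of α(C_15^d)^(1/d), is greater than 7.2495. -/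
set_option maxRecDepth 10000
set_option maxHeartbeats 4000000

/-- The Shannon capacity of the cycle `C_p`: the supremum over `d ≥ 1` of
`α(C_p^d)^(1/d)`, powers taken with respect to the strong product. -/
noncomputable def shannonCapacity (p : ℕ) : ℝ :=
  ⨆ d : {n : ℕ // 0 < n}, (indepNum (cyclePow p d) : ℝ) ^ (((d : ℕ) : ℝ))⁻¹

/- ### Auxiliary machinery -/

/-- `Bool` check that two residues (given as naturals `< 15`) are at circular distance `≥ 2`. -/
def chkB (a b : ℕ) : Bool :=
  decide (2 ≤ min (a - b + (b - a)) (15 - (a - b + (b - a))))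

/-- `Bool` check that two coded triples are non-adjacent in `C₁₅³`. -/
def okN (x y : ℕ × ℕ × ℕ) : Bool :=
  chkB x.1 y.1 || chkB x.2.1 y.2.1 || chkB x.2.2 y.2.2

/-- Decoding a coded triple into a vertex of `C₁₅³`. -/
def cube (x : ℕ × ℕ × ℕ) : Fin 3 → ZMod 15 :=
  ![(x.1 : ZMod 15), (x.2.1 : ZMod 15), (x.2.2 : ZMod 15)]

lemma chkB_spec (a b : ℕ) (ha : a < 15) (hb : b < 15) (h : chkB a b = true) :
    ¬ circDist 15 ((a : ZMod 15)) ((b : ZMod 15)) ≤ 1 ∧ (a : ZMod 15) ≠ (b : ZMod 15) := by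
  have h' := of_decide_eq_true h
  have hva : ((a : ZMod 15)).val = a := by
    rw [ZMod.val_natCast]; exact Nat.mod_eq_of_lt ha
  have hvb : ((b : ZMod 15)).val = b := by
    rw [ZMod.val_natCast]; exact Nat.mod_eq_of_lt hb
  constructor
  · unfold circDist
    rw [hva, hvb]
    have hd : ((a : ℤ) - (b : ℤ)).natAbs = a - b + (b - a) := by omega
    rw [hd]
    omega
  · intro hab
    have : a = b := by rw [← hva, ← hvb, hab]
    omega

lemma okN_spec (x y : ℕ × ℕ × ℕ)
    (hx : x.1 < 15 ∧ x.2.1 < 15 ∧ x.2.2 < 15)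
    (hy : y.1 < 15 ∧ y.2.1 < 15 ∧ y.2.2 < 15)
    (h : okN x y = true) :
    cube x ≠ cube y ∧ ¬ (cyclePow 15 3).Adj (cube x) (cube y) := by
  unfold okN at h
  simp only [Bool.or_eq_true] at h
  obtain (h | h) | h := h
  · obtain ⟨h1, h2⟩ := chkB_spec _ _ hx.1 hy.1 h
    refine ⟨fun he => h2 (congrFun he 0), fun hadj => h1 ((show _ ∧ _ from hadj).2 0)⟩
  · obtain ⟨h1, h2⟩ := chkB_spec _ _ hx.2.1 hy.2.1 h
    refine ⟨fun he => h2 (congrFun he 1), fun hadj => h1 ((show _ ∧ _ from hadj).2 1)⟩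
  · obtain ⟨h1, h2⟩ := chkB_spec _ _ hx.2.2 hy.2.2 h
    refine ⟨fun he => h2 (congrFun he 2), fun hadj => h1 ((show _ ∧ _ from hadj).2 2)⟩

/-- An explicit independent set of size 381 in `C₁₅³`, given as coded triples. -/
def goodList : List (ℕ × ℕ × ℕ) :=
  [
    (0,0,3), (0,1,10), (0,1,14), (0,2,4), (0,3,0), (0,3,10), (0,4,4), (0,4,6),
    (0,5,0), (0,5,11), (0,6,5), (0,6,7), (0,7,1), (0,7,12), (0,8,5), (0,8,7),
    (0,9,1), (0,9,12), (0,10,8), (0,11,2), (0,12,9), (0,12,13), (0,13,3), (0,14,9),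
    (0,14,13), (1,0,1), (1,1,8), (1,1,12), (1,2,2), (1,3,8), (1,3,13), (1,4,2),
    (1,5,13), (1,6,3), (1,6,9), (1,7,14), (1,8,3), (1,8,10), (1,9,14), (1,10,4),
    (1,10,6), (1,10,10), (1,11,0), (1,12,5), (1,12,7), (1,12,11), (1,13,1), (1,14,5),
    (1,14,7), (1,14,11), (2,0,14), (2,1,4), (2,1,6), (2,1,10), (2,2,0), (2,3,4),
    (2,3,11), (2,4,0), (2,4,6), (2,5,11), (2,6,1), (2,6,5), (2,6,7), (2,7,12),
    (2,8,1), (2,8,6), (2,8,8), (2,9,12), (2,10,2), (2,10,8), (2,11,13), (2,12,3),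
    (2,12,9), (2,13,14), (2,14,3), (2,14,9), (3,0,1), (3,0,12), (3,1,8), (3,2,2),
    (3,2,13), (3,3,9), (3,4,2), (3,4,13), (3,5,9), (3,6,3), (3,6,14), (3,7,10),
    (3,8,4), (3,8,14), (3,9,10), (3,10,0), (3,10,4), (3,10,6), (3,11,11), (3,12,1),
    (3,12,5), (3,12,7), (3,13,12), (3,14,5), (3,14,7), (4,0,10), (4,0,14), (4,1,4),
    (4,1,6), (4,2,0), (4,2,11), (4,3,5), (4,3,7), (4,4,0), (4,4,11), (4,5,5),
    (4,5,7), (4,6,1), (4,6,12), (4,7,6), (4,7,8), (4,8,2), (4,8,12), (4,9,8),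
    (4,10,2), (4,10,13), (4,11,9), (4,12,3), (4,12,14), (4,13,10), (4,14,3), (5,0,8),
    (5,1,2), (5,2,9), (5,2,13), (5,3,3), (5,4,9), (5,4,13), (5,5,3), (5,6,10),
    (5,6,14), (5,7,4), (5,8,0), (5,8,10), (5,9,4), (5,9,6), (5,10,0), (5,10,11),
    (5,11,5), (5,11,7), (5,12,1), (5,12,12), (5,13,5), (5,13,7), (5,14,1), (5,14,12),
    (6,0,4), (6,0,6), (6,0,10), (6,1,0), (6,2,5), (6,2,7), (6,2,11), (6,3,1),
    (6,4,5), (6,4,7), (6,4,11), (6,5,1), (6,6,8), (6,6,12), (6,7,2), (6,8,8),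
    (6,8,13), (6,9,2), (6,10,13), (6,11,3), (6,11,9), (6,12,14), (6,13,3), (6,13,10),
    (6,14,14), (7,0,2), (7,0,8), (7,1,13), (7,2,3), (7,2,9), (7,3,14), (7,4,3),
    (7,4,9), (7,5,14), (7,6,4), (7,6,6), (7,6,10), (7,7,0), (7,8,4), (7,8,11),
    (7,9,0), (7,9,6), (7,10,11), (7,11,1), (7,11,5), (7,11,7), (7,12,12), (7,13,1),
    (7,13,6), (7,13,8), (7,14,12), (8,0,0), (8,0,4), (8,0,6), (8,1,11), (8,2,1),
    (8,2,5), (8,2,7), (8,3,12), (8,4,5), (8,4,7), (8,5,1), (8,5,12), (8,6,8),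
    (8,7,2), (8,7,13), (8,8,9), (8,9,2), (8,9,13), (8,10,9), (8,11,3), (8,11,14),
    (8,12,10), (8,13,4), (8,13,14), (8,14,10), (9,0,2), (9,0,13), (9,1,9), (9,2,3),
    (9,2,14), (9,3,10), (9,4,3), (9,5,10), (9,5,14), (9,6,4), (9,6,6), (9,7,0),
    (9,7,11), (9,8,5), (9,8,7), (9,9,0), (9,9,11), (9,10,5), (9,10,7), (9,11,1),
    (9,11,12), (9,12,6), (9,12,8), (9,13,2), (9,13,12), (9,14,8), (10,0,0), (10,0,11),
    (10,1,5), (10,1,7), (10,2,1), (10,2,12), (10,3,5), (10,3,7), (10,4,1), (10,4,12),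
    (10,5,8), (10,6,2), (10,7,9), (10,7,13), (10,8,3), (10,9,9), (10,9,13), (10,10,3),
    (10,11,10), (10,11,14), (10,12,4), (10,13,0), (10,13,10), (10,14,4), (10,14,6), (11,0,13),
    (11,1,3), (11,1,9), (11,2,14), (11,3,3), (11,3,10), (11,4,14), (11,5,4), (11,5,6),
    (11,5,10), (11,6,0), (11,7,5), (11,7,7), (11,7,11), (11,8,1), (11,9,5), (11,9,7),
    (11,9,11), (11,10,1), (11,11,8), (11,11,12), (11,12,2), (11,13,8), (11,13,13), (11,14,2),
    (12,0,11), (12,1,1), (12,1,5), (12,1,7), (12,2,12), (12,3,1), (12,3,6), (12,3,8),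
    (12,4,12), (12,5,2), (12,5,8), (12,6,13), (12,7,3), (12,7,9), (12,8,14), (12,9,3),
    (12,9,9), (12,10,14), (12,11,4), (12,11,6), (12,11,10), (12,12,0), (12,13,4), (12,13,11),
    (12,14,0), (12,14,6), (13,0,9), (13,1,3), (13,1,14), (13,2,10), (13,3,4), (13,3,14),
    (13,4,10), (13,5,0), (13,5,4), (13,5,6), (13,6,11), (13,7,1), (13,7,5), (13,7,7),
    (13,8,12), (13,9,5), (13,9,7), (13,10,1), (13,10,12), (13,11,8), (13,12,2), (13,12,13),
    (13,13,9), (13,14,2), (13,14,13), (14,0,5), (14,0,7), (14,1,1), (14,1,12), (14,2,6),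
    (14,2,8), (14,3,2), (14,3,12), (14,4,8), (14,5,2), (14,5,13), (14,6,9), (14,7,3),
    (14,7,14), (14,8,10), (14,9,3), (14,10,10), (14,10,14), (14,11,4), (14,11,6), (14,12,0),
    (14,12,11), (14,13,5), (14,13,7), (14,14,0), (14,14,11)  ]

lemma goodList_bounds : ∀ x ∈ goodList, x.1 < 15 ∧ x.2.1 < 15 ∧ x.2.2 < 15 := by decide

lemma goodList_pairwise : goodList.Pairwise (fun x y => okN x y = true) := by decide

lemma goodList_length : goodList.length = 381 := by rfl

lemma goodList_pairwise' :
    goodList.Pairwise (fun x y => cube x ≠ cube y ∧ ¬ (cyclePow 15 3).Adj (cube x) (cube y)) := by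
  refine goodList_pairwise.imp_of_mem ?_
  intro a b ha hb h
  exact okN_spec a b (goodList_bounds a ha) (goodList_bounds b hb) h

lemma indepNum_C15_3_ge : 381 ≤ indepNum (cyclePow 15 3) := by
  have hnd : (goodList.map cube).Nodup :=
    List.pairwise_map.mpr (goodList_pairwise'.imp fun h => h.1)
  have hp : (goodList.map cube).Pairwise (fun u v => ¬ (cyclePow 15 3).Adj u v) :=
    List.pairwise_map.mpr (goodList_pairwise'.imp fun h => h.2)
  set s : Finset (Fin 3 → ZMod 15) := (goodList.map cube).toFinset with hs
  have hsymm : Symmetric (fun u v => ¬ (cyclePow 15 3).Adj u v) :=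
    fun u v h ha => h ha.symm
  have hindep : ∀ u ∈ s, ∀ v ∈ s, u ≠ v → ¬ (cyclePow 15 3).Adj u v := by
    intro u hu v hv hne
    have hu' : u ∈ goodList.map cube := by
      rw [hs, List.mem_toFinset] at hu; exact hu
    have hv' : v ∈ goodList.map cube := by
      rw [hs, List.mem_toFinset] at hv; exact hv
    haveI : Std.Symm (fun u v => ¬ (cyclePow 15 3).Adj u v) := ⟨fun a b h => hsymm h⟩
    exact hp.forall hu' hv' hne
  have hcard : s.card = 381 := by
    rw [hs, List.toFinset_card_of_nodup hnd, List.length_map, goodList_length]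
  have hmem : (381 : ℕ) ∈ {n | ∃ s : Finset (Fin 3 → ZMod 15),
      (∀ u ∈ s, ∀ v ∈ s, u ≠ v → ¬ (cyclePow 15 3).Adj u v) ∧ s.card = n} :=
    ⟨s, hindep, hcard⟩
  have hbdd : BddAbove {n | ∃ s : Finset (Fin 3 → ZMod 15),
      (∀ u ∈ s, ∀ v ∈ s, u ≠ v → ¬ (cyclePow 15 3).Adj u v) ∧ s.card = n} := by
    refine ⟨Fintype.card (Fin 3 → ZMod 15), ?_⟩
    rintro n ⟨t, -, rfl⟩
    exact Finset.card_le_univ t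
  exact le_csSup hbdd hmem

lemma indepNum_le (d : ℕ) : indepNum (cyclePow 15 d) ≤ 15 ^ d := by
  have hne : (0 : ℕ) ∈ {n | ∃ s : Finset (Fin d → ZMod 15),
      (∀ u ∈ s, ∀ v ∈ s, u ≠ v → ¬ (cyclePow 15 d).Adj u v) ∧ s.card = n} :=
    ⟨∅, by simp, rfl⟩
  refine csSup_le ⟨0, hne⟩ ?_
  rintro n ⟨t, -, rfl⟩
  calc t.card ≤ Fintype.card (Fin d → ZMod 15) := Finset.card_le_univ t
    _ = 15 ^ d := by simp [Fintype.card_fun]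

lemma capacity_term_le (d : ℕ) (hd : 0 < d) :
    (indepNum (cyclePow 15 d) : ℝ) ^ ((d : ℝ))⁻¹ ≤ 15 := by
  have h1 : (indepNum (cyclePow 15 d) : ℝ) ≤ ((15 : ℝ)) ^ (d : ℕ) := by
    have := indepNum_le d
    calc (indepNum (cyclePow 15 d) : ℝ) ≤ ((15 ^ d : ℕ) : ℝ) := by exact_mod_cast this
      _ = (15 : ℝ) ^ (d : ℕ) := by push_cast; ring
  have h2 : (indepNum (cyclePow 15 d) : ℝ) ^ ((d : ℝ))⁻¹
      ≤ ((15 : ℝ) ^ (d : ℕ)) ^ ((d : ℝ))⁻¹ :=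
    Real.rpow_le_rpow (by positivity) h1 (by positivity)
  refine h2.trans_eq ?_
  rw [← Real.rpow_natCast 15 d, ← Real.rpow_mul (by norm_num),
    mul_inv_cancel₀ (by exact_mod_cast hd.ne'), Real.rpow_one]

theorem shannon_capacity_C15_gt :
    (indepNum (cyclePow 15 3) : ℝ) ^ ((3 : ℝ))⁻¹ ≥ ((381 : ℝ)) ^ ((3 : ℝ))⁻¹ ∧
    ((381 : ℝ)) ^ ((3 : ℝ))⁻¹ > 7.2495 ∧
    shannonCapacity 15 > 7.2495 := by
  have hge : (381 : ℝ) ≤ (indepNum (cyclePow 15 3) : ℝ) := by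
    exact_mod_cast indepNum_C15_3_ge
  have h1 : (indepNum (cyclePow 15 3) : ℝ) ^ ((3 : ℝ))⁻¹ ≥ ((381 : ℝ)) ^ ((3 : ℝ))⁻¹ :=
    Real.rpow_le_rpow (by norm_num) hge (by norm_num)
  have h2 : ((381 : ℝ)) ^ ((3 : ℝ))⁻¹ > 7.2495 := by
    have hx : ((7.2495 : ℝ) ^ (3 : ℕ)) < 381 := by norm_num
    have := Real.rpow_lt_rpow (by positivity) hx (by norm_num : (0:ℝ) < (3 : ℝ)⁻¹)
    calc (7.2495 : ℝ) = (((7.2495 : ℝ) ^ (3 : ℕ)) : ℝ) ^ ((3 : ℝ))⁻¹ := by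
          rw [← Real.rpow_natCast (7.2495 : ℝ) 3, ← Real.rpow_mul (by norm_num)]
          norm_num
      _ < (381 : ℝ) ^ ((3 : ℝ))⁻¹ := this
  refine ⟨h1, h2, ?_⟩
  have hbdd : BddAbove (Set.range fun d : {n : ℕ // 0 < n} =>
      (indepNum (cyclePow 15 d) : ℝ) ^ (((d : ℕ) : ℝ))⁻¹) := by
    refine ⟨15, ?_⟩
    rintro x ⟨d, rfl⟩
    exact capacity_term_le d d.2
  have hle : (indepNum (cyclePow 15 3) : ℝ) ^ ((3 : ℝ))⁻¹ ≤ shannonCapacity 15 := by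
    have := le_ciSup hbdd (⟨3, by norm_num⟩ : {n : ℕ // 0 < n})
    refine le_trans (le_of_eq ?_) this
    congr 1 <;> norm_num
  calc (7.2495 : ℝ) < ((381 : ℝ)) ^ ((3 : ℝ))⁻¹ := h2
    _ ≤ (indepNum (cyclePow 15 3) : ℝ) ^ ((3 : ℝ))⁻¹ := h1
    _ ≤ shannonCapacity 15 := hle
end

section
/- For every integer p > 3, the cycle graph C_p is prime with respect to the strong product: if C_p is isomorphic (as a simple graph) to the strong product G₁ ⊠ G₂ of two simple graphs G₁ and G₂ on finite vertex sets, then G₁ or G₂ has exactly one vertex. -/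
/-- The cycle graph `C_p` on vertex set `ZMod p`: distinct vertices `u, v` are
adjacent iff `u − v = ±1 (mod p)`. -/
def cycleGraph (p : ℕ) : SimpleGraph (ZMod p) where
  Adj u v := u ≠ v ∧ (u - v = 1 ∨ v - u = 1)
  symm := ⟨by
    intro u v ⟨h1, h2⟩
    exact ⟨h1.symm, h2.symm⟩⟩
  loopless := ⟨fun v h => h.1 rfl⟩

/-- The strong product of two simple graphs: distinct vertices `(u₁, u₂)` and
`(v₁, v₂)` are adjacent iff in each coordinate the entries are equal or adjacent. -/
def strongProd {V₁ V₂ : Type*} (G₁ : SimpleGraph V₁) (G₂ : SimpleGraph V₂) :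
    SimpleGraph (V₁ × V₂) where
  Adj u v := u ≠ v ∧ (u.1 = v.1 ∨ G₁.Adj u.1 v.1) ∧ (u.2 = v.2 ∨ G₂.Adj u.2 v.2)
  symm := ⟨by
    intro u v ⟨h1, h2, h3⟩
    refine ⟨h1.symm, ?_, ?_⟩
    · rcases h2 with h | h
      · exact Or.inl h.symm
      · exact Or.inr h.symm
    · rcases h3 with h | h
      · exact Or.inl h.symm
      · exact Or.inr h.symm⟩
  loopless := ⟨fun v h => h.1 rfl⟩

lemma cycleGraph_connected (p : ℕ) (hp : 3 < p) : (cycleGraph p).Connected := by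
  haveI : NeZero p := ⟨by omega⟩
  rw [SimpleGraph.connected_iff]
  refine ⟨?_, ⟨(0 : ZMod p)⟩⟩
  have key : ∀ n : ℕ, (cycleGraph p).Reachable 0 (n : ZMod p) := by
    intro n
    induction n with
    | zero => rw [Nat.cast_zero]
    | succ k ih =>
      refine ih.trans ?_
      by_cases hk : ((k : ZMod p)) = ((k + 1 : ℕ) : ZMod p)
      · rw [hk]
      · exact SimpleGraph.Adj.reachable ⟨hk, Or.inr (by push_cast; ring)⟩
  intro x y
  have hx := key x.val
  have hy := key y.val
  rw [ZMod.natCast_val, ZMod.cast_id] at hx hy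
  exact hx.symm.trans hy

lemma cycleGraph_triangle_free (p : ℕ) (hp : 3 < p) :
    ∀ x y z : ZMod p, (cycleGraph p).Adj x y → (cycleGraph p).Adj y z →
      ¬ (cycleGraph p).Adj x z := by
  haveI : NeZero p := ⟨by omega⟩
  rintro x y z ⟨hxy, hxy'⟩ ⟨hyz, hyz'⟩ ⟨hxz, hxz'⟩
  have h1 : (1 : ZMod p) ≠ 0 := by
    intro h
    have h' := (ZMod.natCast_eq_zero_iff 1 p).mp (by exact_mod_cast h)
    have := Nat.le_of_dvd (by norm_num) h'
    omega
  have h3 : (3 : ZMod p) ≠ 0 := by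
    intro h
    have h' := (ZMod.natCast_eq_zero_iff 3 p).mp (by exact_mod_cast h)
    have := Nat.le_of_dvd (by norm_num) h'
    omega
  rcases hxy' with h | h <;> rcases hyz' with h' | h' <;> rcases hxz' with h'' | h'' <;>
    first
      | exact h1 (by linear_combination h + h' - h'')
      | exact h1 (by linear_combination -h - h' + h'')
      | exact h1 (by linear_combination h - h' + h'')
      | exact h1 (by linear_combination -h + h' - h'')
      | exact h1 (by linear_combination h - h' - h'')
      | exact h1 (by linear_combination -h + h' + h'')
      | exact h1 (by linear_combination h + h' + h'')
      | exact h1 (by linear_combination -h - h' - h'')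
      | exact h3 (by linear_combination h + h' - h'')
      | exact h3 (by linear_combination -h - h' + h'')
      | exact h3 (by linear_combination h - h' + h'')
      | exact h3 (by linear_combination -h + h' - h'')
      | exact h3 (by linear_combination h - h' - h'')
      | exact h3 (by linear_combination -h + h' + h'')
      | exact h3 (by linear_combination h + h' + h'')
      | exact h3 (by linear_combination -h - h' - h'')

/-- If the second factor is edgeless and the strong product is connected, then
the second factor has exactly one vertex. -/
lemma edgeless_snd_card_one {V₁ V₂ : Type*} [Fintype V₁] [Fintype V₂]
    (G₁ : SimpleGraph V₁) (G₂ : SimpleGraph V₂)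
    (h2 : ∀ a b : V₂, ¬ G₂.Adj a b)
    (hc : (strongProd G₁ G₂).Connected) : Fintype.card V₂ = 1 := by
  obtain ⟨⟨u, a⟩⟩ := hc.nonempty
  have key : ∀ x y : V₁ × V₂, (strongProd G₁ G₂).Reachable x y → x.2 = y.2 := by
    rintro x y ⟨w⟩
    induction w with
    | nil => rfl
    | cons hadj _ ih =>
      obtain ⟨_, _, h⟩ := hadj
      rcases h with h | h
      · rw [← ih]; exact h
      · exact absurd h (h2 _ _)
  have hall : ∀ b : V₂, b = a := fun b => key (u, b) (u, a) (hc.preconnected _ _)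
  exact Fintype.card_eq_one_iff.mpr ⟨a, fun b => hall b⟩

/-- The strong product is commutative up to isomorphism. -/
def strongProdComm {V₁ V₂ : Type*} (G₁ : SimpleGraph V₁) (G₂ : SimpleGraph V₂) :
    strongProd G₁ G₂ ≃g strongProd G₂ G₁ where
  toEquiv := Equiv.prodComm V₁ V₂
  map_rel_iff' := by
    intro u v
    show (strongProd G₂ G₁).Adj (u.2, u.1) (v.2, v.1) ↔ (strongProd G₁ G₂).Adj u v
    simp only [strongProd, ne_eq, Prod.mk.injEq, Prod.ext_iff]
    tauto

/-- For `p > 3`, the cycle `C_p` is prime with respect to the strong product: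
if `C_p` is isomorphic to `G₁ ⊠ G₂` for graphs on finite vertex sets, then
`G₁` or `G₂` has exactly one vertex. -/
theorem cycleGraph_prime (p : ℕ) (hp : 3 < p)
    {V₁ V₂ : Type*} [Fintype V₁] [Fintype V₂]
    (G₁ : SimpleGraph V₁) (G₂ : SimpleGraph V₂)
    (h : Nonempty (cycleGraph p ≃g strongProd G₁ G₂)) :
    Fintype.card V₁ = 1 ∨ Fintype.card V₂ = 1 := by
  obtain ⟨e⟩ := h
  have hconn : (strongProd G₁ G₂).Connected := by
    rw [← e.connected_iff]
    exact cycleGraph_connected p hp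
  by_cases hE1 : ∃ u v, G₁.Adj u v
  · by_cases hE2 : ∃ a b, G₂.Adj a b
    · obtain ⟨u, v, hu⟩ := hE1
      obtain ⟨a, b, ha⟩ := hE2
      have t1 : (strongProd G₁ G₂).Adj (u, a) (v, a) :=
        ⟨by simp [Prod.ext_iff, hu.ne], Or.inr hu, Or.inl rfl⟩
      have t2 : (strongProd G₁ G₂).Adj (v, a) (v, b) :=
        ⟨by simp [Prod.ext_iff, ha.ne], Or.inl rfl, Or.inr ha⟩
      have t3 : (strongProd G₁ G₂).Adj (u, a) (v, b) :=
        ⟨by simp [Prod.ext_iff, hu.ne], Or.inr hu, Or.inr ha⟩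
      exact absurd (e.symm.map_rel_iff.mpr t3)
        (cycleGraph_triangle_free p hp _ _ _
          (e.symm.map_rel_iff.mpr t1) (e.symm.map_rel_iff.mpr t2))
    · push_neg at hE2
      exact Or.inr (edgeless_snd_card_one G₁ G₂ hE2 hconn)
  · push_neg at hE1
    refine Or.inl (edgeless_snd_card_one G₂ G₁ hE1 ?_)
    rw [← (strongProdComm G₁ G₂).connected_iff]
    exact hconn
end
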